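/- arXiv:2306.14883 — 3 statements merged into one kernel-verified Lean document; each statement's English description precedes it below -/
import Mathlib

section
/- Let (X, ρ, μ) be a metric triple (Polish metric space with a Borel probability measure of full support) and let M_τ be its matrix distribution on ℝ^{ℕ×ℕ}. Then M_τ is ergodic with respect to the group of finitely supported permutations of ℕ acting by simultaneous permutation of rows and columns: every Borel set A ⊆ ℝ^{ℕ×ℕ} such that for every finitely supported permutation σ of ℕ the preimage of A under (a_{ij}) ↦ (a_{σ(i)σ(j)}) equals A, satisfies M_τ(A) = 0 or M_τ(A) = 1. -/
open MeasureTheory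

/-- `P` is the countable product measure `μ^{⊗ℕ}` on the sequence space `ℕ → X`:
a probability measure whose finite-dimensional cylinder marginals are the corresponding
finite products of `μ`.  (These conditions determine `P` uniquely.) -/
def IsInfiniteProductMeasure {X : Type*} [MeasurableSpace X]
    (μ : Measure X) (P : Measure (ℕ → X)) : Prop :=
  IsProbabilityMeasure P ∧
    ∀ (s : Finset ℕ) (f : ℕ → Set X), (∀ i, MeasurableSet (f i)) →
      P {x | ∀ i ∈ s, x i ∈ f i} = ∏ i ∈ s, μ (f i)

/-- The map sending a sequence of points to its infinite matrix of mutual distances,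
an element of `ℝ^{ℕ×ℕ}`. -/
def distMatrixMap (X : Type*) [MetricSpace X] : (ℕ → X) → (ℕ × ℕ → ℝ) :=
  fun x p => dist (x p.1) (x p.2)

/-- The action of a permutation `σ` of `ℕ` on infinite matrices by simultaneous
permutation of rows and columns: `(a_{ij}) ↦ (a_{σ(i)σ(j)})`. -/
def permuteMatrix (σ : Equiv.Perm ℕ) : (ℕ × ℕ → ℝ) → (ℕ × ℕ → ℝ) :=
  fun a p => a (σ p.1, σ p.2)

open scoped symmDiff

open MeasureTheory MeasurableSpace Set

section Aux

/-- The "swap the blocks `[0,n)` and `[n,2n)`" function. -/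
def swapFun (n i : ℕ) : ℕ := if i < n then i + n else if i < 2*n then i - n else i

lemma swapFun_involutive (n : ℕ) : Function.Involutive (swapFun n) := by
  intro i
  unfold swapFun
  split_ifs <;> omega

/-- The permutation of `ℕ` swapping the blocks `[0,n)` and `[n,2n)`. -/
def swapPerm (n : ℕ) : Equiv.Perm ℕ := (swapFun_involutive n).toPerm _

lemma swapPerm_apply (n i : ℕ) : swapPerm n i = swapFun n i := by
  simp [swapPerm, Function.Involutive.coe_toPerm]

lemma swapPerm_apply_lt (n : ℕ) {i : ℕ} (h : i < n) : swapPerm n i = i + n := by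
  rw [swapPerm_apply, swapFun, if_pos h]

lemma swapPerm_support (n : ℕ) : {i | swapPerm n i ≠ i}.Finite := by
  refine (Set.finite_Iio (2*n)).subset fun i hi => ?_
  simp only [Set.mem_setOf_eq] at hi
  by_contra h
  simp only [Set.mem_Iio, not_lt] at h
  apply hi
  rw [swapPerm_apply, swapFun]
  split_ifs <;> omega

variable {X : Type*} [mX : MeasurableSpace X] {μ : Measure X} {P : Measure (ℕ → X)}

lemma indep_coords
    (hPcyl : ∀ (s : Finset ℕ) (f : ℕ → Set X), (∀ i, MeasurableSet (f i)) →
      P {x | ∀ i ∈ s, x i ∈ f i} = ∏ i ∈ s, μ (f i)) :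
    ProbabilityTheory.iIndep (fun i => mX.comap (fun x : ℕ → X => x i)) P := by
  classical
  rw [ProbabilityTheory.iIndep_iff]
  intro s f hf
  have hf' : ∀ i ∈ s, ∃ t, MeasurableSet t ∧ (fun x : ℕ → X => x i) ⁻¹' t = f i :=
    fun i hi => MeasurableSpace.measurableSet_comap.mp (hf i hi)
  choose g hg hfg using hf'
  set g' : ℕ → Set X := fun i => if h : i ∈ s then g i h else Set.univ with hg'def
  have hg'meas : ∀ i, MeasurableSet (g' i) := by
    intro i
    simp only [hg'def]
    split
    · exact hg _ _
    · exact MeasurableSet.univ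
  have hfg' : ∀ i (hi : i ∈ s), f i = (fun x : ℕ → X => x i) ⁻¹' (g' i) := by
    intro i hi
    rw [← hfg i hi]
    simp only [hg'def, dif_pos hi]
  have h1 : (⋂ i ∈ s, f i) = {x : ℕ → X | ∀ i ∈ s, x i ∈ g' i} := by
    ext x
    simp only [Set.mem_iInter, Set.mem_setOf_eq]
    exact forall₂_congr fun i hi => by rw [hfg' i hi]; rfl
  have h2 : ∀ i ∈ s, P (f i) = μ (g' i) := by
    intro i hi
    have heq : f i = {x : ℕ → X | ∀ j ∈ ({i} : Finset ℕ), x j ∈ g' j} := by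
      rw [hfg' i hi]
      ext x
      simp
    rw [heq, hPcyl {i} g' hg'meas, Finset.prod_singleton]
  rw [h1, hPcyl s g' hg'meas]
  exact Finset.prod_congr rfl fun i hi => (h2 i hi).symm

lemma map_perm (hPprob : IsProbabilityMeasure P)
    (hPcyl : ∀ (s : Finset ℕ) (f : ℕ → Set X), (∀ i, MeasurableSet (f i)) →
      P {x | ∀ i ∈ s, x i ∈ f i} = ∏ i ∈ s, μ (f i))
    (σ : Equiv.Perm ℕ) :
    P.map (fun x : ℕ → X => fun i => x (σ i)) = P := by
  classical
  haveI := hPprob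
  set T : (ℕ → X) → (ℕ → X) := fun x => fun i => x (σ i) with hT
  have hTmeas : Measurable T := measurable_pi_lambda _ fun i => measurable_pi_apply (σ i)
  set Cyl : Set (Set (ℕ → X)) := {S | ∃ (s : Finset ℕ) (f : ℕ → Set X),
      (∀ i, MeasurableSet (f i)) ∧ S = {x | ∀ i ∈ s, x i ∈ f i}} with hCyl
  have hcylmeas : ∀ S ∈ Cyl, MeasurableSet S := by
    rintro S ⟨s, f, hf, rfl⟩
    have : {x : ℕ → X | ∀ i ∈ s, x i ∈ f i} = ⋂ i ∈ s, (fun x : ℕ → X => x i) ⁻¹' f i := by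
      ext x; simp
    rw [this]
    exact MeasurableSet.biInter s.countable_toSet fun i _ => (measurable_pi_apply i) (hf i)
  have hgen : (inferInstance : MeasurableSpace (ℕ → X)) = MeasurableSpace.generateFrom Cyl := by
    refine le_antisymm ?_ (MeasurableSpace.generateFrom_le hcylmeas)
    have hpi : (inferInstance : MeasurableSpace (ℕ → X))
        = ⨆ i : ℕ, mX.comap (fun x : ℕ → X => x i) := rfl
    rw [hpi]
    refine iSup_le fun i => ?_
    rintro S ⟨t, ht, rfl⟩
    apply MeasurableSpace.measurableSet_generateFrom
    exact ⟨{i}, fun _ => t, fun _ => ht, by ext x; simp⟩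
  have hpisys : IsPiSystem Cyl := by
    rintro S ⟨s, f, hf, rfl⟩ T' ⟨t, g, hg, rfl⟩ -
    refine ⟨s ∪ t, fun i => (if i ∈ s then f i else Set.univ) ∩ (if i ∈ t then g i else Set.univ),
      fun i => ?_, ?_⟩
    · apply MeasurableSet.inter <;> [skip; skip] <;> split_ifs <;>
        first | exact hf _ | exact hg _ | exact MeasurableSet.univ
    · ext x
      simp only [Set.mem_inter_iff, Set.mem_setOf_eq, Finset.mem_union]
      constructor
      · rintro ⟨h1, h2⟩ i hi
        constructor
        · split_ifs with h
          · exact h1 i h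
          · exact Set.mem_univ _
        · split_ifs with h
          · exact h2 i h
          · exact Set.mem_univ _
      · intro h
        constructor
        · intro i hi
          have := (h i (Or.inl hi)).1
          rwa [if_pos hi] at this
        · intro i hi
          have := (h i (Or.inr hi)).2
          rwa [if_pos hi] at this
  haveI : IsProbabilityMeasure (P.map T) := Measure.isProbabilityMeasure_map hTmeas.aemeasurable
  refine MeasureTheory.ext_of_generate_finite Cyl hgen hpisys ?_ ?_
  · rintro S ⟨s, f, hf, rfl⟩
    have hSmeas : MeasurableSet {x : ℕ → X | ∀ i ∈ s, x i ∈ f i} :=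
      hcylmeas _ ⟨s, f, hf, rfl⟩
    rw [Measure.map_apply hTmeas hSmeas]
    have hpre : T ⁻¹' {x : ℕ → X | ∀ i ∈ s, x i ∈ f i}
        = {x : ℕ → X | ∀ j ∈ s.image σ, x j ∈ f (σ.symm j)} := by
      ext x
      simp only [Set.mem_preimage, Set.mem_setOf_eq, Finset.mem_image, hT]
      constructor
      · rintro h j ⟨i, hi, rfl⟩
        simpa using h i hi
      · intro h i hi
        simpa using h (σ i) ⟨i, hi, rfl⟩
    rw [hpre, hPcyl (s.image σ) (fun j => f (σ.symm j)) (fun j => hf _), hPcyl s f hf,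
      Finset.prod_image (fun a _ b _ h => σ.injective h)]
    simp
  · simp [Measure.map_apply hTmeas MeasurableSet.univ]

end Aux
/-- The matrix distribution of a metric triple is ergodic with respect to the group of
finitely supported permutations of `ℕ` acting by simultaneous permutation of rows and
columns: any Borel set invariant under all such permutations has measure `0` or `1`. -/
theorem matrixDistribution_ergodic
    {X : Type*} [MetricSpace X] [TopologicalSpace.SeparableSpace X] [CompleteSpace X]
    [MeasurableSpace X] [BorelSpace X]
    (μ : Measure X) [IsProbabilityMeasure μ] [μ.IsOpenPosMeasure]
    (P : Measure (ℕ → X)) (hP : IsInfiniteProductMeasure μ P)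
    (A : Set (ℕ × ℕ → ℝ)) (hA : MeasurableSet A)
    (hinv : ∀ σ : Equiv.Perm ℕ, {i | σ i ≠ i}.Finite → permuteMatrix σ ⁻¹' A = A) :
    P.map (distMatrixMap X) A = 0 ∨ P.map (distMatrixMap X) A = 1 := by
  classical
  obtain ⟨hPprob, hPcyl⟩ := hP
  haveI : IsProbabilityMeasure P := hPprob
  -- the coordinate σ-algebras and their finite sups
  set mc : ℕ → MeasurableSpace (ℕ → X) :=
    fun i => MeasurableSpace.comap (fun x : ℕ → X => x i) ‹MeasurableSpace X› with hmc
  have hmc_le : ∀ i, mc i ≤ (inferInstance : MeasurableSpace (ℕ → X)) :=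
    fun i => measurable_iff_comap_le.mp (measurable_pi_apply i)
  set F : ℕ → MeasurableSpace (ℕ → X) := fun n => ⨆ i ∈ Set.Iio n, mc i with hF
  have hFle : ∀ n, F n ≤ (inferInstance : MeasurableSpace (ℕ → X)) :=
    fun n => iSup₂_le fun i _ => hmc_le i
  have hFmono : Monotone F := fun a b hab =>
    biSup_mono fun i (hi : i < a) => lt_of_lt_of_le hi hab
  -- approximation by finitely based sets
  set 𝒜 : Set (Set (ℕ → X)) := ⋃ n, {s | MeasurableSet[F n] s} with h𝒜
  have hAlg : IsSetAlgebra 𝒜 := by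
    constructor
    · exact Set.mem_iUnion.mpr ⟨0, @MeasurableSet.empty _ (F 0)⟩
    · intro s hs
      obtain ⟨n, hn⟩ := Set.mem_iUnion.mp hs
      exact Set.mem_iUnion.mpr ⟨n, (MeasurableSet.compl (hn : MeasurableSet[F n] s) : MeasurableSet[F n] sᶜ)⟩
    · intro s t hs ht
      obtain ⟨n, hn⟩ := Set.mem_iUnion.mp hs
      obtain ⟨m, hm⟩ := Set.mem_iUnion.mp ht
      refine Set.mem_iUnion.mpr ⟨max n m, ?_⟩
      exact (MeasurableSet.union (hFmono (le_max_left n m) _ hn) (hFmono (le_max_right n m) _ hm)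
        : MeasurableSet[F (max n m)] (s ∪ t))
  have hsup : (⨆ n, F n) = (inferInstance : MeasurableSpace (ℕ → X)) := by
    refine le_antisymm (iSup_le fun n => hFle n) ?_
    have hpi : (inferInstance : MeasurableSpace (ℕ → X)) = ⨆ i, mc i := rfl
    rw [hpi]
    refine iSup_le fun i => ?_
    exact le_trans (le_biSup mc (show i ∈ Set.Iio (i+1) from Nat.lt_succ_self i))
      (le_iSup F (i+1))
  have hdense : P.MeasureDense 𝒜 :=
    Measure.MeasureDense.of_generateFrom_isSetAlgebra_finite P hAlg
      (by rw [h𝒜]; exact ((MeasurableSpace.generateFrom_iUnion_measurableSet F).trans hsup).symm)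
  -- the invariant set upstairs
  have hdm : Measurable (distMatrixMap X) :=
    measurable_pi_lambda _ fun p =>
      Measurable.dist (measurable_pi_apply p.1) (measurable_pi_apply p.2)
  set B : Set (ℕ → X) := distMatrixMap X ⁻¹' A with hBdef
  have hB : MeasurableSet B := hdm hA
  set b : ℝ := (P B).toReal with hb
  have hb0 : 0 ≤ b := ENNReal.toReal_nonneg
  have hb1 : b ≤ 1 := by
    rw [hb]
    exact ENNReal.toReal_le_of_le_ofReal one_pos.le (by simpa using prob_le_one)
  -- the key estimate
  have key : ∀ ε : ℝ, 0 < ε → |b - b * b| ≤ 4 * ε := by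
    intro ε hε
    obtain ⟨C, hC𝒜, hCfin, hCapprox⟩ := hdense.fin_meas_approx hB (measure_ne_top P B) ε hε
    obtain ⟨n, hCn⟩ := Set.mem_iUnion.mp hC𝒜
    have hCmeas : MeasurableSet C := hFle n C hCn
    -- the block-swap permutation
    set σn : Equiv.Perm ℕ := swapPerm n with hσn
    set T : (ℕ → X) → (ℕ → X) := fun x => fun i => x (σn i) with hT
    have hTmeas : Measurable T := measurable_pi_lambda _ fun i => measurable_pi_apply (σn i)
    have hmap : P.map T = P := map_perm hPprob hPcyl σn
    -- T⁻¹' C is measurable w.r.t. coordinates in [n, 2n)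
    have hTC : MeasurableSet[⨆ i ∈ Set.Ico n (2*n), mc i] (T ⁻¹' C) := by
      have h1 : MeasurableSet[(F n).comap T] (T ⁻¹' C) := ⟨C, hCn, rfl⟩
      have h2 : (F n).comap T ≤ ⨆ i ∈ Set.Ico n (2*n), mc i := by
        rw [hF]
        simp only [MeasurableSpace.comap_iSup]
        refine iSup_le fun i => iSup_le fun hi => ?_
        rw [hmc, MeasurableSpace.comap_comp]
        have heq : ((fun x : ℕ → X => x i) ∘ T) = fun x : ℕ → X => x (σn i) := rfl
        rw [heq]
        have hi' : i < n := hi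
        have hmem : σn i ∈ Set.Ico n (2*n) := by
          rw [hσn, swapPerm_apply_lt n hi']
          exact ⟨Nat.le_add_left n i, by omega⟩
        exact le_biSup mc hmem
      exact h2 _ h1
    have hTCmeas : MeasurableSet (T ⁻¹' C) := hTmeas hCmeas
    -- independence
    have hIndep : ProbabilityTheory.Indep (F n) (⨆ i ∈ Set.Ico n (2*n), mc i) P := by
      refine ProbabilityTheory.indep_iSup_of_disjoint hmc_le (indep_coords hPcyl) ?_
      exact Set.disjoint_left.mpr fun a (ha : a < n) hb => absurd hb.1 (not_le.2 ha)
    have hmul : P (C ∩ T ⁻¹' C) = P C * P (T ⁻¹' C) :=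
      (ProbabilityTheory.Indep_iff _ _ _).mp hIndep C (T ⁻¹' C) hCn hTC
    -- invariance facts
    have hTB : T ⁻¹' B = B := by
      have h1 : T ⁻¹' B = distMatrixMap X ⁻¹' (permuteMatrix σn ⁻¹' A) := rfl
      rw [h1, hinv σn (swapPerm_support n)]
    have hTCP : P (T ⁻¹' C) = P C := by
      conv_rhs => rw [← hmap]
      rw [Measure.map_apply hTmeas hCmeas]
    have hsd : P (B ∆ (T ⁻¹' C)) = P (B ∆ C) := by
      have h1 : B ∆ (T ⁻¹' C) = T ⁻¹' (B ∆ C) := by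
        rw [Set.preimage_symmDiff, hTB]
      rw [h1]
      conv_rhs => rw [← hmap]
      rw [Measure.map_apply hTmeas (hB.symmDiff hCmeas)]
    -- real-number bookkeeping
    set c : ℝ := (P C).toReal with hc
    have hc0 : 0 ≤ c := ENNReal.toReal_nonneg
    have hc1 : c ≤ 1 := ENNReal.toReal_le_of_le_ofReal one_pos.le (by simpa using prob_le_one)
    have hbc : |b - c| ≤ ε := by
      refine le_trans (abs_measureReal_sub_le_measureReal_symmDiff hB.nullMeasurableSet
        hCmeas.nullMeasurableSet) ?_
      exact (ENNReal.toReal_lt_of_lt_ofReal hCapprox).le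
    have hd : (P (C ∩ T ⁻¹' C)).toReal = c * c := by
      rw [hmul, ENNReal.toReal_mul, hTCP]
    have hbd : |b - c * c| ≤ 2 * ε := by
      rw [← hd]
      refine le_trans (abs_measureReal_sub_le_measureReal_symmDiff hB.nullMeasurableSet
        (hCmeas.inter hTCmeas).nullMeasurableSet) ?_
      have hsub : B ∆ (C ∩ T ⁻¹' C) ⊆ (B ∆ C) ∪ (B ∆ (T ⁻¹' C)) := by
        intro x hx
        simp only [Set.mem_symmDiff, Set.mem_union, Set.mem_inter_iff] at *
        tauto
      have h3 : P (B ∆ (C ∩ T ⁻¹' C)) ≤ P (B ∆ C) + P (B ∆ (T ⁻¹' C)) :=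
        le_trans (measure_mono hsub) (measure_union_le _ _)
      have h4 : P (B ∆ (C ∩ T ⁻¹' C)) ≤ 2 * P (B ∆ C) := by
        rw [two_mul]
        rwa [hsd] at h3
      calc (P (B ∆ (C ∩ T ⁻¹' C))).toReal
          ≤ (2 * P (B ∆ C)).toReal := by
            refine ENNReal.toReal_mono ?_ h4
            exact ENNReal.mul_ne_top (by norm_num) (measure_ne_top _ _)
        _ = 2 * (P (B ∆ C)).toReal := by
            rw [ENNReal.toReal_mul]; norm_num
        _ ≤ 2 * ε := by
            have := (ENNReal.toReal_lt_of_lt_ofReal hCapprox).le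
            linarith
    -- combine
    have habs2 : |c * c - b * b| ≤ 2 * ε := by
      have heq : c * c - b * b = (c - b) * (c + b) := by ring
      rw [heq, abs_mul]
      have h5 : |c + b| ≤ 2 := by
        rw [abs_of_nonneg (by linarith)]
        linarith
      have h6 : |c - b| ≤ ε := by rwa [abs_sub_comm]
      calc |c - b| * |c + b| ≤ ε * 2 :=
            mul_le_mul h6 h5 (abs_nonneg _) hε.le
        _ = 2 * ε := by ring
    calc |b - b * b| = |(b - c * c) + (c * c - b * b)| := by ring_nf
      _ ≤ |b - c * c| + |c * c - b * b| := abs_add_le _ _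
      _ ≤ 2 * ε + 2 * ε := add_le_add hbd habs2
      _ = 4 * ε := by ring
  -- conclude b ∈ {0, 1}
  have hbb : b - b * b = 0 := by
    by_contra hne
    have hpos : 0 < |b - b * b| := abs_pos.mpr hne
    have h := key (|b - b * b| / 8) (by positivity)
    linarith
  have hb01 : b = 0 ∨ b = 1 := by
    have : b * (1 - b) = 0 := by linarith [hbb]
    rcases mul_eq_zero.mp this with h | h
    · exact Or.inl h
    · exact Or.inr (by linarith)
  rw [Measure.map_apply hdm hA]
  rcases hb01 with h | h
  · left
    have := (ENNReal.toReal_eq_zero_iff (P B)).mp h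
    rcases this with h' | h'
    · exact h'
    · exact absurd h' (measure_ne_top P B)
  · right
    exact (ENNReal.toReal_eq_one_iff (P B)).mp h
end

section
/- For every c > 0 and every s ≥ 0, the Laplace transform of the Lévy distribution with parameter c satisfies ∫_0^∞ e^{−s x} · √(c/(2π)) x^{−3/2} exp(−c/(2x)) dx = exp(−√(2 c s)). -/
open MeasureTheory Real Set

/-- The density of the Lévy distribution with parameter `c > 0`:
`x ↦ √(c/(2π)) x^(−3/2) exp(−c/(2x))` for `x > 0` and `0` for `x ≤ 0`. -/
noncomputable def levyDensity (c : ℝ) (x : ℝ) : ℝ :=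
  if 0 < x then Real.sqrt (c / (2 * Real.pi)) * x ^ (-(3 / 2 : ℝ)) * Real.exp (-c / (2 * x))
  else 0

/-- The Lévy distribution with parameter `c > 0`, as a measure on `ℝ`. -/
noncomputable def levyMeasure (c : ℝ) : Measure ℝ :=
  volume.withDensity fun x => ENNReal.ofReal (levyDensity c x)

section LevyAux

section helpers
lemma inv_scale_image (k : ℝ) (hk : 0 < k) : (fun u : ℝ => k / u) '' Ioi 0 = Ioi 0 := by
  ext x
  constructor
  · rintro ⟨u, hu, rfl⟩
    exact div_pos hk hu
  · intro hx
    exact ⟨k / x, div_pos hk hx, by field_simp⟩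

lemma inv_scale_integral (k : ℝ) (hk : 0 < k) (F : ℝ → ℝ) :
    ∫ t in Ioi (0:ℝ), F t = ∫ u in Ioi (0:ℝ), (k / u ^ 2) * F (k / u) := by
  conv_lhs => rw [← inv_scale_image k hk]
  rw [integral_image_eq_integral_abs_deriv_smul measurableSet_Ioi
    (f' := fun u => -(k / u ^ 2)) ?_ ?_]
  · apply setIntegral_congr_fun measurableSet_Ioi
    intro u hu
    have hu' : (0:ℝ) < u := hu
    simp only [abs_neg, smul_eq_mul]
    rw [abs_of_pos (by positivity)]
  · intro u hu
    have hu' : (u:ℝ) ≠ 0 := ne_of_gt hu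
    have : HasDerivAt (fun u : ℝ => k / u) (-(k / u ^ 2)) u := by
      simpa [div_eq_mul_inv, mul_comm, neg_mul, mul_neg] using (hasDerivAt_inv hu').const_mul k
    exact this.hasDerivWithinAt
  · intro u hu v hv h
    have hu' : (u:ℝ) ≠ 0 := ne_of_gt hu
    have hv' : (v:ℝ) ≠ 0 := ne_of_gt hv
    field_simp at h
    rcases h with h | h
    · rfl
end helpers

section glasser
lemma glasser_deriv {a b t : ℝ} (ht : t ≠ 0) :
    HasDerivAt (fun t : ℝ => a * t - b / t) (a + b / t ^ 2) t := by
  have h1 : HasDerivAt (fun t : ℝ => a * t - b * t⁻¹) (a * 1 - b * (-(↑t ^ 2)⁻¹)) t :=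
    ((hasDerivAt_id t).const_mul a).sub ((hasDerivAt_inv ht).const_mul b)
  have : a * 1 - b * (-(t ^ 2)⁻¹) = a + b / t ^ 2 := by field_simp; ring
  rw [this] at h1
  simpa [div_eq_mul_inv] using h1

lemma glasser_mono {a b : ℝ} (ha : 0 < a) (hb : 0 < b) :
    StrictMonoOn (fun t : ℝ => a * t - b / t) (Ioi 0) := by
  intro t ht u hu htu
  have h2 : b / u < b / t := div_lt_div_of_pos_left hb ht htu
  have h1 : a * t < a * u := by nlinarith
  simp only
  linarith

lemma glasser_image {a b : ℝ} (ha : 0 < a) (hb : 0 < b) :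
    (fun t : ℝ => a * t - b / t) '' Ioi 0 = univ := by
  apply eq_univ_of_forall
  intro y
  have h4 : (0:ℝ) < y ^ 2 + 4 * a * b := by positivity
  set d := Real.sqrt (y ^ 2 + 4 * a * b) with hd
  have hd2 : d ^ 2 = y ^ 2 + 4 * a * b := Real.sq_sqrt h4.le
  have hdy : |y| < d := by
    rw [← Real.sqrt_sq_eq_abs]
    exact Real.sqrt_lt_sqrt (sq_nonneg y) (by nlinarith)
  have ht : 0 < (y + d) / (2 * a) := by
    apply div_pos _ (by positivity)
    have := abs_nonneg y
    have := neg_abs_le y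
    linarith
  refine ⟨(y + d) / (2 * a), ht, ?_⟩
  set t := (y + d) / (2 * a) with htdef
  have htne : t ≠ 0 := ne_of_gt ht
  have hq : a * t ^ 2 = y * t + b := by
    rw [htdef]
    field_simp
    nlinarith [hd2]
  show a * t - b / t = y
  have : a * t - b / t = (a * t ^ 2 - b) / t := by field_simp
  rw [this, hq]
  field_simp
  ring

lemma glasser_integral {a b : ℝ} (ha : 0 < a) (hb : 0 < b) :
    ∫ t in Ioi (0:ℝ), (a + b / t ^ 2) * Real.exp (-(a ^ 2 * t ^ 2 + b ^ 2 / t ^ 2))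
      = Real.sqrt π * Real.exp (-(2 * a * b)) := by
  have hg : ∫ x : ℝ, Real.exp (-(1:ℝ) * x ^ 2) = Real.sqrt (π / 1) := integral_gaussian 1
  simp only [neg_mul, one_mul, div_one] at hg
  have key : ∫ x : ℝ, Real.exp (-x ^ 2)
      = ∫ t in Ioi (0:ℝ), (a + b / t ^ 2) * Real.exp (-(a * t - b / t) ^ 2) := by
    rw [← setIntegral_univ, ← glasser_image ha hb,
      integral_image_eq_integral_abs_deriv_smul measurableSet_Ioi
        (f' := fun t => a + b / t ^ 2) (fun t ht => (glasser_deriv (ne_of_gt ht)).hasDerivWithinAt)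
        ((glasser_mono ha hb).injOn)]
    apply setIntegral_congr_fun measurableSet_Ioi
    intro t ht
    have ht' : (0:ℝ) < t := ht
    simp only [smul_eq_mul]
    rw [abs_of_pos (by positivity)]
  have expand : ∀ t : ℝ, t ≠ 0 → (a * t - b / t) ^ 2 = a ^ 2 * t ^ 2 + b ^ 2 / t ^ 2 - 2 * a * b := by
    intro t ht; field_simp; ring
  have : ∫ t in Ioi (0:ℝ), (a + b / t ^ 2) * Real.exp (-(a * t - b / t) ^ 2)
      = ∫ t in Ioi (0:ℝ), ((a + b / t ^ 2) * Real.exp (-(a ^ 2 * t ^ 2 + b ^ 2 / t ^ 2))) * Real.exp (2 * a * b) := by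
    apply setIntegral_congr_fun measurableSet_Ioi
    intro t ht
    simp only
    rw [expand t (ne_of_gt ht),
      show -(a ^ 2 * t ^ 2 + b ^ 2 / t ^ 2 - 2 * a * b)
        = -(a ^ 2 * t ^ 2 + b ^ 2 / t ^ 2) + 2 * a * b by ring, Real.exp_add]
    ring
  rw [this, integral_mul_const] at key
  have hepos : (0:ℝ) < Real.exp (2 * a * b) := Real.exp_pos _
  rw [Real.exp_neg]
  rw [← hg, key]
  field_simp
end glasser

section integrability
lemma meas_h (a b : ℝ) : Measurable (fun t : ℝ => Real.exp (-(a ^ 2 * t ^ 2 + b ^ 2 / t ^ 2))) := by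
  fun_prop

lemma int_h {a : ℝ} (b : ℝ) (ha : 0 < a) :
    IntegrableOn (fun t : ℝ => Real.exp (-(a ^ 2 * t ^ 2 + b ^ 2 / t ^ 2))) (Ioi 0) := by
  apply Integrable.mono' ((integrable_exp_neg_mul_sq (show (0:ℝ) < a ^ 2 by positivity)).restrict (s := Ioi 0))
  · exact (meas_h a b).aestronglyMeasurable
  · filter_upwards with t
    rw [Real.norm_eq_abs, abs_of_pos (Real.exp_pos _)]
    apply Real.exp_le_exp.2
    have : (0:ℝ) ≤ b ^ 2 / t ^ 2 := by positivity
    nlinarith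

lemma int_t2h {a b : ℝ} (ha : 0 < a) (hb : 0 < b) :
    IntegrableOn (fun t : ℝ => 1 / t ^ 2 * Real.exp (-(a ^ 2 * t ^ 2 + b ^ 2 / t ^ 2))) (Ioi 0) := by
  apply Integrable.mono'
    (((integrable_exp_neg_mul_sq (show (0:ℝ) < a ^ 2 by positivity)).restrict (s := Ioi 0)).const_mul (1 / b ^ 2))
  · exact (measurable_const.div (measurable_id.pow_const 2)).mul (meas_h a b) |>.aestronglyMeasurable
  · rw [ae_restrict_iff' measurableSet_Ioi]
    filter_upwards with t ht
    have ht' : (0:ℝ) < t := ht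
    rw [Real.norm_eq_abs, abs_of_pos (by positivity)]
    rw [show -(a ^ 2 * t ^ 2 + b ^ 2 / t ^ 2) = -(b ^ 2 / t ^ 2) + -(a ^ 2 * t ^ 2) by ring,
      Real.exp_add]
    have hx : (0:ℝ) < b ^ 2 / t ^ 2 := by positivity
    have h1 : b ^ 2 / t ^ 2 * Real.exp (-(b ^ 2 / t ^ 2)) ≤ 1 := by
      rw [Real.exp_neg, ← div_eq_mul_inv, div_le_one (Real.exp_pos _)]
      linarith [Real.add_one_le_exp (b ^ 2 / t ^ 2)]
    have hE : Real.exp (-(b ^ 2 / t ^ 2)) ≤ 1 / (b ^ 2 / t ^ 2) := by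
      rw [le_div_iff₀ hx]; linarith
    have h2 : 1 / t ^ 2 * Real.exp (-(b ^ 2 / t ^ 2)) ≤ 1 / b ^ 2 := by
      calc 1 / t ^ 2 * Real.exp (-(b ^ 2 / t ^ 2)) ≤ 1 / t ^ 2 * (t ^ 2 / b ^ 2) := by
            apply mul_le_mul_of_nonneg_left (hE.trans_eq (one_div_div _ _)) (by positivity)
        _ = 1 / b ^ 2 := by field_simp
    calc 1 / t ^ 2 * (Real.exp (-(b ^ 2 / t ^ 2)) * Real.exp (-(a ^ 2 * t ^ 2)))
        = (1 / t ^ 2 * Real.exp (-(b ^ 2 / t ^ 2))) * Real.exp (-(a ^ 2 * t ^ 2)) := by ring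
      _ ≤ 1 / b ^ 2 * Real.exp (-(a ^ 2 * t ^ 2)) := by
          apply mul_le_mul_of_nonneg_right h2 (Real.exp_pos _).le
      _ = 1 / b ^ 2 * Real.exp (-a ^ 2 * t ^ 2) := by ring_nf
end integrability

lemma T_val {a b : ℝ} (ha : 0 ≤ a) (hb : 0 < b) :
    ∫ t in Ioi (0:ℝ), 1 / t ^ 2 * Real.exp (-(a ^ 2 * t ^ 2 + b ^ 2 / t ^ 2))
      = Real.sqrt π / (2 * b) * Real.exp (-(2 * a * b)) := by
  rcases ha.eq_or_lt with rfl | ha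
  · -- a = 0 case
    rw [inv_scale_integral 1 one_pos]
    have : ∫ u in Ioi (0:ℝ), (1 / u ^ 2) *
        (1 / (1 / u) ^ 2 * Real.exp (-((0:ℝ) ^ 2 * (1 / u) ^ 2 + b ^ 2 / (1 / u) ^ 2)))
        = ∫ u in Ioi (0:ℝ), Real.exp (-b ^ 2 * u ^ 2) := by
      apply setIntegral_congr_fun measurableSet_Ioi
      intro u hu
      have hu' : (0:ℝ) < u := hu
      have hune : u ≠ 0 := ne_of_gt hu'
      simp only
      rw [show -((0:ℝ) ^ 2 * (1 / u) ^ 2 + b ^ 2 / (1 / u) ^ 2) = -b ^ 2 * u ^ 2 by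
        field_simp; ring]
      field_simp
    rw [this, integral_gaussian_Ioi, Real.sqrt_div Real.pi_pos.le, Real.sqrt_sq hb.le]
    rw [show -(2 * 0 * b) = 0 by ring, Real.exp_zero]
    ring
  · -- a > 0 case
    set J := ∫ t in Ioi (0:ℝ), Real.exp (-(a ^ 2 * t ^ 2 + b ^ 2 / t ^ 2)) with hJ
    set T := ∫ t in Ioi (0:ℝ), 1 / t ^ 2 * Real.exp (-(a ^ 2 * t ^ 2 + b ^ 2 / t ^ 2)) with hT
    have hsymm : T = a / b * J := by
      rw [hT, inv_scale_integral (b / a) (div_pos hb ha)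
        (fun t => 1 / t ^ 2 * Real.exp (-(a ^ 2 * t ^ 2 + b ^ 2 / t ^ 2))), hJ,
        ← integral_const_mul]
      apply setIntegral_congr_fun measurableSet_Ioi
      intro u hu
      have hu' : (0:ℝ) < u := hu
      have hune : u ≠ 0 := ne_of_gt hu'
      simp only
      have e1 : a ^ 2 * (b / a / u) ^ 2 + b ^ 2 / (b / a / u) ^ 2
          = a ^ 2 * u ^ 2 + b ^ 2 / u ^ 2 := by
        field_simp
        ring
      rw [e1]
      have e2 : b / a / u ^ 2 * (1 / (b / a / u) ^ 2) = a / b := by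
        field_simp
      rw [← mul_assoc, e2]
    have hsplit : a * J + b * T = Real.sqrt π * Real.exp (-(2 * a * b)) := by
      rw [← glasser_integral ha hb]
      rw [hJ, hT, ← integral_const_mul, ← integral_const_mul,
        ← integral_add ((int_h b ha).const_mul a) ((int_t2h ha hb).const_mul b)]
      apply setIntegral_congr_fun measurableSet_Ioi
      intro t ht
      simp only
      ring
    have hbT : b * T = a * J := by rw [hsymm]; field_simp
    have h2 : 2 * (b * T) = Real.sqrt π * Real.exp (-(2 * a * b)) := by
      rw [two_mul]
      nth_rewrite 1 [hbT]
      exact hsplit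
    rw [div_mul_eq_mul_div, eq_div_iff (by positivity)]
    linarith

lemma sq_image_Ioi : (fun t : ℝ => t ^ 2) '' Ioi 0 = Ioi 0 := by
  ext x
  constructor
  · rintro ⟨t, ht, rfl⟩
    have ht' : (0:ℝ) < t := ht
    show (0:ℝ) < t ^ 2
    positivity
  · intro hx
    have hx' : (0:ℝ) < x := hx
    exact ⟨Real.sqrt x, Real.sqrt_pos.2 hx', Real.sq_sqrt hx'.le⟩

lemma sq_injOn : InjOn (fun t : ℝ => t ^ 2) (Ioi 0) := by
  intro u hu v hv h
  have hu' : (0:ℝ) < u := hu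
  have hv' : (0:ℝ) < v := hv
  simp only at h
  rw [← Real.sqrt_sq hu'.le, ← Real.sqrt_sq hv'.le, h]

end LevyAux

/-- Laplace transform of the Lévy distribution:
`∫_0^∞ e^{−sx} √(c/(2π)) x^{−3/2} e^{−c/(2x)} dx = exp(−√(2cs))`. -/
theorem levy_laplace_transform (c : ℝ) (hc : 0 < c) (s : ℝ) (hs : 0 ≤ s) :
    (∫ x in Set.Ioi (0 : ℝ),
        Real.exp (-s * x) *
          (Real.sqrt (c / (2 * Real.pi)) * x ^ (-(3 / 2 : ℝ)) * Real.exp (-c / (2 * x))))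
      = Real.exp (-Real.sqrt (2 * c * s)) := by
  set C := Real.sqrt (c / (2 * Real.pi)) with hCdef
  set a := Real.sqrt s with hadef
  set b := Real.sqrt (c / 2) with hbdef
  have ha : 0 ≤ a := Real.sqrt_nonneg s
  have hb : 0 < b := Real.sqrt_pos.2 (by linarith)
  have ha2 : a ^ 2 = s := Real.sq_sqrt hs
  have hb2 : b ^ 2 = c / 2 := Real.sq_sqrt (by linarith)
  have hπ : 0 < Real.sqrt π := Real.sqrt_pos.2 Real.pi_pos
  -- substitution x = t ^ 2
  rw [show Set.Ioi (0:ℝ) = (fun t : ℝ => t ^ 2) '' Set.Ioi 0 from sq_image_Ioi.symm,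
    integral_image_eq_integral_abs_deriv_smul measurableSet_Ioi
      (f' := fun t => 2 * t)
      (fun t _ => by simpa using (hasDerivAt_pow 2 t).hasDerivWithinAt)
      sq_injOn]
  have hcongr : ∫ t in Ioi (0:ℝ), |2 * t| •
      (Real.exp (-s * t ^ 2) * (C * (t ^ 2) ^ (-(3 / 2 : ℝ)) * Real.exp (-c / (2 * t ^ 2))))
      = ∫ t in Ioi (0:ℝ), (2 * C) * (1 / t ^ 2 * Real.exp (-(a ^ 2 * t ^ 2 + b ^ 2 / t ^ 2))) := by
    apply setIntegral_congr_fun measurableSet_Ioi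
    intro t ht
    have ht' : (0:ℝ) < t := ht
    have htne : t ≠ 0 := ne_of_gt ht'
    simp only [smul_eq_mul]
    rw [abs_of_pos (by positivity : (0:ℝ) < 2 * t)]
    have h32 : ((t ^ 2 : ℝ)) ^ (-(3 / 2 : ℝ)) = (t ^ 3)⁻¹ := by
      rw [← Real.rpow_natCast t 2, ← Real.rpow_mul ht'.le,
        show ((2:ℕ):ℝ) * (-(3 / 2 : ℝ)) = -(3:ℝ) by norm_num,
        Real.rpow_neg ht'.le, show (3:ℝ) = ((3:ℕ):ℝ) by norm_num, Real.rpow_natCast]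
    rw [h32]
    have hexp : Real.exp (-s * t ^ 2) * Real.exp (-c / (2 * t ^ 2))
        = Real.exp (-(a ^ 2 * t ^ 2 + b ^ 2 / t ^ 2)) := by
      rw [← Real.exp_add]
      congr 1
      rw [ha2, hb2]
      field_simp
      ring
    calc 2 * t * (Real.exp (-s * t ^ 2) * (C * (t ^ 3)⁻¹ * Real.exp (-c / (2 * t ^ 2))))
        = 2 * C * (1 / t ^ 2 * (Real.exp (-s * t ^ 2) * Real.exp (-c / (2 * t ^ 2)))) := by
          field_simp
      _ = 2 * C * (1 / t ^ 2 * Real.exp (-(a ^ 2 * t ^ 2 + b ^ 2 / t ^ 2))) := by rw [hexp]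
  rw [hcongr, integral_const_mul, T_val ha hb]
  -- final computation
  have h2ab : 2 * a * b = Real.sqrt (2 * c * s) := by
    have hsq : (2 * a * b) ^ 2 = 2 * c * s := by
      rw [mul_pow, mul_pow, ha2, hb2]; ring
    rw [← hsq, Real.sqrt_sq (by positivity)]
  have hCb : C * Real.sqrt π = b := by
    rw [hCdef, show c / (2 * π) = (c / 2) / π by ring,
      Real.sqrt_div (by linarith : (0:ℝ) ≤ c / 2) π, hbdef]
    field_simp
  rw [h2ab]
  have : 2 * C * (Real.sqrt π / (2 * b)) = 1 := by
    field_simp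
    linarith [hCb]
  calc 2 * C * (Real.sqrt π / (2 * b) * Real.exp (-Real.sqrt (2 * c * s)))
      = (2 * C * (Real.sqrt π / (2 * b))) * Real.exp (-Real.sqrt (2 * c * s)) := by ring
    _ = Real.exp (-Real.sqrt (2 * c * s)) := by rw [this, one_mul]
end

section
/- Let X be a nonnegative real random variable and a > 0 a constant such that √t · P(X > t) → a as t → ∞. Then (1 − E[e^{−s X}]) / √s → a √π as s → 0⁺. -/
open MeasureTheory Real Filter Set

lemma laplace_aux_identity {Ω : Type*} [MeasurableSpace Ω] (P : Measure Ω) [IsProbabilityMeasure P]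
    (X : Ω → ℝ) (hX : Measurable X) (hpos : ∀ ω, 0 ≤ X ω) {s : ℝ} (hs : 0 < s) :
    (1 - ∫ ω, Real.exp (-s * X ω) ∂P) / Real.sqrt s
      = ∫ v in Set.Ioi (0:ℝ),
          Real.exp (-v) * (P {ω | v / s < X ω}).toReal / Real.sqrt s := by
  have hint : Integrable (fun ω => Real.exp (-s * X ω)) P := by
    refine Integrable.mono' (integrable_const (1:ℝ))
      ((hX.const_mul (-s)).exp.aestronglyMeasurable) (ae_of_all _ fun ω => ?_)
    rw [Real.norm_eq_abs, abs_of_pos (exp_pos _)]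
    exact Real.exp_le_one_iff.mpr (by nlinarith [hpos ω])
  have hf_int : Integrable (fun ω => 1 - Real.exp (-s * X ω)) P := (integrable_const 1).sub hint
  have hf_nn : 0 ≤ᵐ[P] fun ω => 1 - Real.exp (-s * X ω) := ae_of_all _ fun ω => by
    have : Real.exp (-s * X ω) ≤ 1 := Real.exp_le_one_iff.mpr (by nlinarith [hpos ω])
    simp only [Pi.zero_apply]; linarith
  have h1 : 1 - ∫ ω, Real.exp (-s * X ω) ∂P = ∫ ω, (1 - Real.exp (-s * X ω)) ∂P := by
    rw [integral_sub (integrable_const 1) hint, integral_const]; simp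
  have h2 := hf_int.integral_eq_integral_meas_lt hf_nn
  set h : ℝ → ℝ := fun t => (P {ω | t < 1 - Real.exp (-s * X ω)}).toReal with hh
  have h3 : ∫ t in Set.Ioi (0:ℝ), h t = ∫ t in Set.Ioo (0:ℝ) 1, h t := by
    have e1 : ∫ t in Set.Ioi (0:ℝ), h t
        = ∫ t in Set.Ioi (0:ℝ), (Set.Ioo (0:ℝ) 1).indicator h t := by
      refine setIntegral_congr_fun measurableSet_Ioi fun t ht => ?_
      by_cases h1t : t < 1
      · rw [Set.indicator_of_mem (show t ∈ Set.Ioo (0:ℝ) 1 from ⟨ht, h1t⟩)]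
      · rw [Set.indicator_of_notMem (fun hmem => h1t hmem.2)]
        have hempty : {ω | t < 1 - Real.exp (-s * X ω)} = ∅ := by
          ext ω
          simp only [Set.mem_setOf_eq, Set.mem_empty_iff_false, iff_false, not_lt]
          have := Real.exp_pos (-s * X ω)
          linarith [not_lt.mp h1t]
        show (P {ω | t < 1 - Real.exp (-s * X ω)}).toReal = 0
        rw [hempty]; simp
    rw [e1, setIntegral_indicator measurableSet_Ioo,
      Set.inter_eq_right.mpr Set.Ioo_subset_Ioi_self]
  have himg : (fun v : ℝ => 1 - Real.exp (-v)) '' Set.Ioi (0:ℝ) = Set.Ioo (0:ℝ) 1 := by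
    ext t
    constructor
    · rintro ⟨v, hv, rfl⟩
      simp only [Set.mem_Ioo]
      have hp := Real.exp_pos (-v)
      have hl : Real.exp (-v) < 1 := Real.exp_lt_one_iff.mpr (by simpa using hv)
      exact ⟨by linarith, by linarith⟩
    · rintro ⟨h0, h1'⟩
      refine ⟨-Real.log (1 - t), ?_, ?_⟩
      · have hlog := Real.log_neg (by linarith : (0:ℝ) < 1 - t) (by linarith : (1:ℝ) - t < 1)
        exact Set.mem_Ioi.mpr (by linarith)
      · simp only [neg_neg]
        rw [Real.exp_log (by linarith)]; ring
  have hderiv : ∀ v ∈ Set.Ioi (0:ℝ),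
      HasDerivWithinAt (fun v : ℝ => 1 - Real.exp (-v)) (Real.exp (-v)) (Set.Ioi 0) v := by
    intro v _
    have h1' : HasDerivAt (fun v : ℝ => Real.exp (-v)) (Real.exp (-v) * (-1)) v :=
      (Real.hasDerivAt_exp (-v)).comp v (hasDerivAt_neg v)
    have := h1'.const_sub 1
    simpa using this.hasDerivWithinAt
  have hinj : Set.InjOn (fun v : ℝ => 1 - Real.exp (-v)) (Set.Ioi (0:ℝ)) := by
    intro x _ y _ hxy
    simp only at hxy
    have hexp : Real.exp (-x) = Real.exp (-y) := by linarith
    have := Real.exp_injective hexp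
    linarith
  have h4 : ∫ t in Set.Ioo (0:ℝ) 1, h t
      = ∫ v in Set.Ioi (0:ℝ), |Real.exp (-v)| • h (1 - Real.exp (-v)) := by
    rw [← himg]
    exact integral_image_eq_integral_abs_deriv_smul measurableSet_Ioi hderiv hinj h
  have h5 : ∀ v ∈ Set.Ioi (0:ℝ), |Real.exp (-v)| • h (1 - Real.exp (-v))
      = Real.exp (-v) * (P {ω | v / s < X ω}).toReal := by
    intro v _
    have hset : {ω | 1 - Real.exp (-v) < 1 - Real.exp (-s * X ω)} = {ω | v / s < X ω} := by
      ext ω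
      simp only [Set.mem_setOf_eq]
      rw [sub_lt_sub_iff_left, Real.exp_lt_exp, div_lt_iff₀ hs]
      constructor <;> intro <;> nlinarith
    simp only [hh, hset, smul_eq_mul, abs_of_pos (Real.exp_pos _)]
  calc (1 - ∫ ω, Real.exp (-s * X ω) ∂P) / Real.sqrt s
      = (∫ t in Set.Ioi (0:ℝ), h t) / Real.sqrt s := by rw [h1, h2]; rfl
    _ = (∫ v in Set.Ioi (0:ℝ), Real.exp (-v) * (P {ω | v / s < X ω}).toReal) / Real.sqrt s := by
        rw [h3, h4, setIntegral_congr_fun measurableSet_Ioi h5]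
    _ = ∫ v in Set.Ioi (0:ℝ), Real.exp (-v) * (P {ω | v / s < X ω}).toReal / Real.sqrt s :=
        (integral_div _ _).symm

/-- Tauberian-type statement: if `X ≥ 0` and `√t · P(X > t) → a > 0` as `t → ∞`, then
`(1 − E[e^{−sX}])/√s → a√π` as `s → 0⁺`. -/
theorem laplace_transform_tail_asymptotic
    {Ω : Type*} [MeasurableSpace Ω] (P : Measure Ω) [IsProbabilityMeasure P]
    (X : Ω → ℝ) (hX : Measurable X) (hpos : ∀ ω, 0 ≤ X ω)
    (a : ℝ) (ha : 0 < a)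
    (htail : Filter.Tendsto (fun t : ℝ => Real.sqrt t * (P {ω | t < X ω}).toReal)
      Filter.atTop (nhds a)) :
    Filter.Tendsto
      (fun s : ℝ => (1 - ∫ ω, Real.exp (-s * X ω) ∂P) / Real.sqrt s)
      (nhdsWithin 0 (Set.Ioi 0)) (nhds (a * Real.sqrt Real.pi)) := by
  set g : ℝ → ℝ := fun t => (P {ω | t < X ω}).toReal with hg
  have hg_meas : Measurable g := by
    have hanti : Antitone g := by
      intro t1 t2 h12
      exact ENNReal.toReal_mono (measure_ne_top P _)
        (measure_mono fun ω hω => lt_of_le_of_lt h12 hω)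
    exact hanti.measurable
  have hg_nonneg : ∀ t, 0 ≤ g t := fun t => ENNReal.toReal_nonneg
  have hg_le_one : ∀ t, g t ≤ 1 := fun t => by
    have := ENNReal.toReal_mono (by simp) (prob_le_one (μ := P) (s := {ω | t < X ω}))
    simpa using this
  obtain ⟨T, hT⟩ : ∃ T : ℝ, ∀ t ≥ T, Real.sqrt t * g t ≤ a + 1 :=
    eventually_atTop.mp (htail.eventually_le_const (lt_add_one a))
  set M : ℝ := max (Real.sqrt (max T 0)) (a + 1) with hM
  have hM_bound : ∀ t : ℝ, 0 < t → Real.sqrt t * g t ≤ M := by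
    intro t ht
    rcases le_or_gt T t with h | h
    · exact le_max_of_le_right (hT t h)
    · calc Real.sqrt t * g t ≤ Real.sqrt t * 1 :=
            mul_le_mul_of_nonneg_left (hg_le_one t) (Real.sqrt_nonneg t)
        _ = Real.sqrt t := mul_one _
        _ ≤ Real.sqrt (max T 0) := Real.sqrt_le_sqrt (le_trans h.le (le_max_left _ _))
        _ ≤ M := le_max_left _ _
  -- pointwise rewriting identity
  have hptw : ∀ (s v : ℝ), 0 < s → 0 < v →
      Real.exp (-v) * g (v / s) / Real.sqrt s
        = Real.exp (-v) / Real.sqrt v * (Real.sqrt (v / s) * g (v / s)) := by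
    intro s v hs hv
    rw [Real.sqrt_div hv.le]
    have h1 : Real.sqrt v ≠ 0 := (Real.sqrt_pos.mpr hv).ne'
    have h2 : Real.sqrt s ≠ 0 := (Real.sqrt_pos.mpr hs).ne'
    field_simp
  have hrpow : ∀ v : ℝ, 0 < v → v ^ (-(1/2) : ℝ) = (Real.sqrt v)⁻¹ := by
    intro v hv
    rw [Real.rpow_neg hv.le, Real.sqrt_eq_rpow]
  have hdct : Filter.Tendsto
      (fun s : ℝ => ∫ v in Set.Ioi (0:ℝ), Real.exp (-v) * g (v / s) / Real.sqrt s)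
      (nhdsWithin 0 (Set.Ioi 0)) (nhds (a * Real.sqrt Real.pi)) := by
    have hgamma : ∫ v in Set.Ioi (0:ℝ), Real.exp (-v) * v ^ (-(1/2) : ℝ)
        = Real.sqrt Real.pi := by
      have := Real.Gamma_eq_integral (by norm_num : (0:ℝ) < 1/2)
      norm_num at this
      rw [← this, Real.Gamma_one_half_eq]
    have hbound_int : Integrable (fun v : ℝ => M * (Real.exp (-v) * v ^ (-(1/2) : ℝ)))
        (volume.restrict (Set.Ioi 0)) := by
      have h := Real.GammaIntegral_convergent (by norm_num : (0:ℝ) < 1/2)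
      norm_num at h
      exact h.const_mul M
    have key : Filter.Tendsto
        (fun s : ℝ => ∫ v in Set.Ioi (0:ℝ), Real.exp (-v) * g (v / s) / Real.sqrt s)
        (nhdsWithin 0 (Set.Ioi 0))
        (nhds (∫ v in Set.Ioi (0:ℝ), a * (Real.exp (-v) * v ^ (-(1/2) : ℝ)))) := by
      apply tendsto_integral_filter_of_dominated_convergence
        (fun v : ℝ => M * (Real.exp (-v) * v ^ (-(1/2) : ℝ)))
      · refine Eventually.of_forall fun s => ?_
        exact (((Real.measurable_exp.comp measurable_neg).mul
          (hg_meas.comp (measurable_id.div_const s))).div_const _).aestronglyMeasurable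
      · filter_upwards [self_mem_nhdsWithin] with s hs
        rw [ae_restrict_iff' measurableSet_Ioi]
        refine ae_of_all _ fun v hv => ?_
        have hv' : (0:ℝ) < v := hv
        have hs' : (0:ℝ) < s := hs
        rw [hptw s v hs' hv']
        have hvs_pos : 0 < v / s := div_pos hv' hs'
        have hnn : 0 ≤ Real.exp (-v) / Real.sqrt v * (Real.sqrt (v / s) * g (v / s)) := by
          positivity
        rw [Real.norm_eq_abs, abs_of_nonneg hnn]
        calc Real.exp (-v) / Real.sqrt v * (Real.sqrt (v / s) * g (v / s))
            ≤ Real.exp (-v) / Real.sqrt v * M := by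
              refine mul_le_mul_of_nonneg_left (hM_bound _ hvs_pos) ?_
              positivity
          _ = M * (Real.exp (-v) * v ^ (-(1/2) : ℝ)) := by
              rw [hrpow v hv']; ring
      · exact hbound_int
      · rw [ae_restrict_iff' measurableSet_Ioi]
        refine ae_of_all _ fun v hv => ?_
        have hv' : (0:ℝ) < v := hv
        have hvs : Filter.Tendsto (fun s : ℝ => v / s) (nhdsWithin 0 (Set.Ioi 0)) atTop := by
          simpa [div_eq_mul_inv] using
            (tendsto_inv_nhdsGT_zero (𝕜 := ℝ)).const_mul_atTop hv'
        have h1 : Filter.Tendsto (fun s : ℝ => Real.sqrt (v / s) * g (v / s))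
            (nhdsWithin 0 (Set.Ioi 0)) (nhds a) := htail.comp hvs
        have h2 := h1.const_mul (Real.exp (-v) / Real.sqrt v)
        have heq : (fun s : ℝ => Real.exp (-v) / Real.sqrt v * (Real.sqrt (v / s) * g (v / s)))
            =ᶠ[nhdsWithin 0 (Set.Ioi 0)]
            (fun s : ℝ => Real.exp (-v) * g (v / s) / Real.sqrt s) := by
          filter_upwards [self_mem_nhdsWithin] with s hs
          exact (hptw s v hs hv').symm
        have hval : Real.exp (-v) / Real.sqrt v * a
            = a * (Real.exp (-v) * v ^ (-(1/2) : ℝ)) := by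
          rw [hrpow v hv']; ring
        rw [← hval]
        exact h2.congr' heq
    have hfinal : ∫ v in Set.Ioi (0:ℝ), a * (Real.exp (-v) * v ^ (-(1/2) : ℝ))
        = a * Real.sqrt Real.pi := by
      rw [integral_const_mul, hgamma]
    rwa [hfinal] at key
  refine hdct.congr' ?_
  filter_upwards [self_mem_nhdsWithin] with s hs
  exact (laplace_aux_identity P X hX hpos hs).symm
end
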